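/- For every integer k ≥ 1, the minimum of the dominator chromatic number χ_d(D) over all orientations D of the path P_{4k+1} equals k+2. -/
import Mathlib


/-- A vertex `v` dominates the color class of color `a` under coloring `c`:
the class is nonempty and every vertex of that color is an out-neighbor of `v`. -/
def Dominates {V α : Type*} (A : V → V → Prop) (c : V → α) (v : V) (a : α) : Prop :=
  (∃ w, c w = a) ∧ ∀ w, c w = a → A v w

/-- A dominator coloring of the digraph with arc relation `A`: a proper coloring
such that every vertex with positive out-degree dominates some color class. -/
def IsDominatorColoring {V α : Type*} (A : V → V → Prop) (c : V → α) : Prop :=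
  (∀ u v, A u v → c u ≠ c v) ∧ ∀ v, (∃ w, A v w) → ∃ a, Dominates A c v a

/-- The dominator chromatic number: the least `k` admitting a dominator coloring
with colors in `Fin k`. -/
noncomputable def domChrom {V : Type*} (A : V → V → Prop) : ℕ :=
  sInf {k | ∃ c : V → Fin k, IsDominatorColoring A c}

/-- The arc relation of the orientation of the path `P_n` (vertices `0,…,n-1`)
determined by `o`: the edge between `i` and `i+1` is directed `i → i+1`
when `o i = true` and `i+1 → i` when `o i = false`. -/
def pathArc (n : ℕ) (o : ℕ → Bool) (u v : Fin n) : Prop :=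
  ((u : ℕ) + 1 = (v : ℕ) ∧ o u = true) ∨ ((v : ℕ) + 1 = (u : ℕ) ∧ o v = false)

/-- The minimum of the dominator chromatic number over all orientations of `P_n`. -/
noncomputable def minDomChromPath (n : ℕ) : ℕ :=
  sInf {m | ∃ o : ℕ → Bool, m = domChrom (pathArc n o)}

lemma card_le_two_pq {α : Type*} {s : Finset α} {P Q : α → Prop}
    (h : ∀ x ∈ s, P x ∨ Q x)
    (hP : ∀ x ∈ s, ∀ y ∈ s, P x → P y → x = y)
    (hQ : ∀ x ∈ s, ∀ y ∈ s, Q x → Q y → x = y) : s.card ≤ 2 := by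
  by_contra hlt
  obtain ⟨a, ha, b, hb, d, hd, hab, had, hbd⟩ :=
    Finset.two_lt_card.mp (lt_of_not_ge hlt)
  rcases h a ha with pa | qa <;> rcases h b hb with pb | qb <;> rcases h d hd with pd | qd <;>
    first
      | exact hab (hP a ha b hb ‹_› ‹_›)
      | exact had (hP a ha d hd ‹_› ‹_›)
      | exact hbd (hP b hb d hd ‹_› ‹_›)
      | exact hab (hQ a ha b hb ‹_› ‹_›)
      | exact had (hQ a ha d hd ‹_› ‹_›)
      | exact hbd (hQ b hb d hd ‹_› ‹_›)

lemma lower_bound (k : ℕ) (hk : 1 ≤ k) (o : ℕ → Bool) (t : ℕ)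
    (c : Fin (4*k+1) → Fin t)
    (hc : IsDominatorColoring (pathArc (4*k+1) o) c) : k + 2 ≤ t := by
  classical
  by_contra hge
  push_neg at hge
  obtain ⟨hproper, hdom⟩ := hc
  set A := pathArc (4*k+1) o with hA
  -- the set of vertices with positive out-degree
  set Vp : Finset (Fin (4*k+1)) := Finset.univ.filter (fun v => ∃ w, A v w) with hVp
  have hVpmem : ∀ v : Fin (4*k+1), v ∈ Vp ↔ ∃ w, A v w := by
    intro v; simp [hVp]
  -- arcs characterization
  have harc : ∀ u v : Fin (4*k+1), A u v →
      (((u:ℕ) + 1 = v ∧ o u = true) ∨ ((v:ℕ) + 1 = u ∧ o v = false)) := fun u v h => h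
  -- the tail map on edges
  have hedge : ∀ e : Fin (4*k), (e:ℕ) < 4*k+1 ∧ (e:ℕ)+1 < 4*k+1 := by
    intro e; have := e.isLt; omega
  set T : Fin (4*k) → Fin (4*k+1) := fun e =>
    if o (e:ℕ) then ⟨(e:ℕ), (hedge e).1⟩ else ⟨(e:ℕ)+1, (hedge e).2⟩ with hT
  have hTmem : ∀ e, T e ∈ Vp := by
    intro e
    rw [hVpmem]
    by_cases he : o (e:ℕ) = true
    · refine ⟨⟨(e:ℕ)+1, (hedge e).2⟩, Or.inl ?_⟩
      simp [hT, he]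
    · refine ⟨⟨(e:ℕ), (hedge e).1⟩, Or.inr ?_⟩
      simp [hT, he]
  have hTval : ∀ (e : Fin (4*k)) (v : Fin (4*k+1)), T e = v →
      ((e:ℕ) = (v:ℕ) ∧ o (v:ℕ) = true) ∨ ((e:ℕ)+1 = (v:ℕ) ∧ o ((v:ℕ)-1) = false) := by
    intro e v hev
    by_cases he : o (e:ℕ) = true
    · left
      have : (T e : ℕ) = (e:ℕ) := by simp [hT, he]
      have hev' := congrArg Fin.val hev
      constructor
      · omega
      · have : (e:ℕ) = (v:ℕ) := by omega
        rw [← this]; exact he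
    · right
      have : (T e : ℕ) = (e:ℕ)+1 := by simp [hT, he]
      have hev' := congrArg Fin.val hev
      constructor
      · omega
      · have h2 : (v:ℕ)-1 = (e:ℕ) := by omega
        rw [h2]; simpa using he
  have hTfiber : ∀ v : Fin (4*k+1),
      (Finset.univ.filter (fun e => T e = v)).card ≤ 2 := by
    intro v
    apply card_le_two_pq (P := fun e : Fin (4*k) => (e:ℕ) = (v:ℕ))
      (Q := fun e : Fin (4*k) => (e:ℕ)+1 = (v:ℕ))
    · intro x hx
      have hx' := (Finset.mem_filter.mp hx).2
      rcases hTval x v hx' with ⟨h1, _⟩ | ⟨h1, _⟩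
      · exact Or.inl h1
      · exact Or.inr h1
    · intro x _ y _ h1 h2; exact Fin.ext (by omega)
    · intro x _ y _ h1 h2; exact Fin.ext (by omega)
  -- |Vp| ≥ 2k
  have hVplb : 2*k ≤ Vp.card := by
    have h1 : (Finset.univ : Finset (Fin (4*k))).card ≤ 2 * Vp.card :=
      Finset.card_le_mul_card_image_of_maps_to (fun e _ => hTmem e) 2
        (fun b _ => hTfiber b)
    simp at h1
    omega
  -- choose dominated colors
  have hfex : ∀ v : Fin (4*k+1), ∃ a, v ∈ Vp → Dominates A c v a := by
    intro v
    by_cases hv : v ∈ Vp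
    · obtain ⟨a, ha⟩ := hdom v ((hVpmem v).mp hv)
      exact ⟨a, fun _ => ha⟩
    · exact ⟨c v, fun h => absurd h hv⟩
  choose f hf using hfex
  set D : Finset (Fin t) := Vp.image f with hD
  -- fibers of f on Vp have card ≤ 2
  have hffiber : ∀ a : Fin t, (Vp.filter (fun v => f v = a)).card ≤ 2 := by
    intro a
    rcases (Vp.filter (fun v => f v = a)).eq_empty_or_nonempty with he | ⟨v0, hv0⟩
    · simp [he]
    · have hv0' := Finset.mem_filter.mp hv0
      obtain ⟨⟨w, hw⟩, -⟩ := hf v0 hv0'.1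
      rw [hv0'.2] at hw
      apply card_le_two_pq (P := fun x : Fin (4*k+1) => (x:ℕ)+1 = (w:ℕ))
        (Q := fun x : Fin (4*k+1) => (w:ℕ)+1 = (x:ℕ))
      · intro x hx
        have hx' := Finset.mem_filter.mp hx
        have hAxw : A x w := by
          have := (hf x hx'.1).2 w (by rw [hx'.2]; exact hw)
          exact this
        rcases harc x w hAxw with ⟨h1, _⟩ | ⟨h1, _⟩
        · exact Or.inl h1
        · exact Or.inr h1
      · intro x _ y _ h1 h2; exact Fin.ext (by omega)
      · intro x _ y _ h1 h2; exact Fin.ext (by omega)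
  have hVpD : Vp.card ≤ 2 * D.card :=
    Finset.card_le_mul_card_image_of_maps_to
      (fun v hv => Finset.mem_image_of_mem f hv) 2 (fun b _ => hffiber b)
  have hDlb : k ≤ D.card := by omega
  have hDub : D.card ≤ t := by
    have := Finset.card_le_univ D
    simpa using this
  -- color classes
  set classC : Fin t → Finset (Fin (4*k+1)) :=
    fun a => Finset.univ.filter (fun x => c x = a) with hclassC
  have hclassD : ∀ a ∈ D, (classC a).card ≤ 2 := by
    intro a ha
    obtain ⟨v, hv, hfv⟩ := Finset.mem_image.mp ha
    apply card_le_two_pq (P := fun x : Fin (4*k+1) => (v:ℕ)+1 = (x:ℕ))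
      (Q := fun x : Fin (4*k+1) => (x:ℕ)+1 = (v:ℕ))
    · intro x hx
      have hx' : c x = a := (Finset.mem_filter.mp hx).2
      have hAvx : A v x := (hf v hv).2 x (by rw [hfv]; exact hx')
      rcases harc v x hAvx with ⟨h1, _⟩ | ⟨h1, _⟩
      · exact Or.inl h1
      · exact Or.inr h1
    · intro x _ y _ h1 h2; exact Fin.ext (by omega)
    · intro x _ y _ h1 h2; exact Fin.ext (by omega)
  -- total count
  have hsum : ∑ a ∈ D, (classC a).card + ∑ a ∈ Dᶜ, (classC a).card = 4*k+1 := by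
    rw [Finset.sum_add_sum_compl]
    have := Finset.card_eq_sum_card_fiberwise
      (f := c) (s := Finset.univ) (t := Finset.univ)
      (fun x _ => Finset.mem_univ (c x))
    simp at this
    rw [← this]
  have hsumD : ∑ a ∈ D, (classC a).card ≤ 2 * D.card := by
    calc ∑ a ∈ D, (classC a).card ≤ ∑ _a ∈ D, 2 := Finset.sum_le_sum hclassD
    _ = 2 * D.card := by rw [Finset.sum_const]; ring
  by_cases hDt : D.card = t
  · -- all colors dominated: contradiction by counting
    have hcompl : Dᶜ = ∅ := by
      have : Dᶜ.card = 0 := by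
        rw [Finset.card_compl]
        simp [hDt]
      exact Finset.card_eq_zero.mp this
    rw [hcompl] at hsum
    simp at hsum
    omega
  · -- D.card = k, t = k+1
    have hDk : D.card = k := by omega
    have htk : t = k+1 := by omega
    have hDc1 : Dᶜ.card = 1 := by
      rw [Finset.card_compl]
      simp [hDk, htk]
    -- |Vp| = 2k
    have hVpcard : Vp.card = 2*k := by omega
    -- (B) every vertex of Vp is a double source
    have hTsum : ∑ v ∈ Vp, (Finset.univ.filter (fun e => T e = v)).card = 4*k := by
      have := Finset.card_eq_sum_card_fiberwise (f := T) (s := Finset.univ) (t := Vp)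
        (fun e _ => hTmem e)
      simpa using this.symm
    have hTfib2 : ∀ v ∈ Vp, (Finset.univ.filter (fun e => T e = v)).card = 2 := by
      by_contra hex
      push_neg at hex
      obtain ⟨v0, hv0, hne⟩ := hex
      have hsl : ∑ v ∈ Vp, (Finset.univ.filter (fun e => T e = v)).card
          < ∑ _v ∈ Vp, 2 :=
        Finset.sum_lt_sum (fun v _ => hTfiber v)
          ⟨v0, hv0, lt_of_le_of_ne (hTfiber v0) hne⟩
      rw [Finset.sum_const, hTsum] at hsl
      simp [hVpcard] at hsl
      omega
    have hsrc : ∀ v ∈ Vp,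
        0 < (v:ℕ) ∧ (v:ℕ) < 4*k ∧ o ((v:ℕ)-1) = false ∧ o (v:ℕ) = true := by
      intro v hv
      obtain ⟨e1, e2, hne, heq⟩ := Finset.card_eq_two.mp (hTfib2 v hv)
      have he1 : T e1 = v := by
        have : e1 ∈ Finset.univ.filter (fun e => T e = v) := by rw [heq]; simp
        exact (Finset.mem_filter.mp this).2
      have he2 : T e2 = v := by
        have : e2 ∈ Finset.univ.filter (fun e => T e = v) := by rw [heq]; simp
        exact (Finset.mem_filter.mp this).2
      have h1 := hTval e1 v he1
      have h2 := hTval e2 v he2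
      have hne' : (e1:ℕ) ≠ (e2:ℕ) := fun h => hne (Fin.ext h)
      have hel1 := e1.isLt
      have hel2 := e2.isLt
      rcases h1 with ⟨ha1, hb1⟩ | ⟨ha1, hb1⟩ <;> rcases h2 with ⟨ha2, hb2⟩ | ⟨ha2, hb2⟩
      · omega
      · exact ⟨by omega, by omega, hb2, hb1⟩
      · exact ⟨by omega, by omega, hb1, hb2⟩
      · omega
    have hout : ∀ v ∈ Vp, ∀ u : Fin (4*k+1),
        ((u:ℕ) = (v:ℕ)+1 ∨ (u:ℕ)+1 = (v:ℕ)) → A v u := by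
      intro v hv u hu
      obtain ⟨h1, h2, h3, h4⟩ := hsrc v hv
      rcases hu with h | h
      · exact Or.inl ⟨h.symm, h4⟩
      · refine Or.inr ⟨h, ?_⟩
        have hval : (u:ℕ) = (v:ℕ)-1 := by omega
        rw [hval]
        exact h3
    -- (C) each dominated color class is a singleton avoiding Vp
    have hfsum : ∑ a ∈ D, (Vp.filter (fun v => f v = a)).card = 2*k := by
      have := Finset.card_eq_sum_card_fiberwise (f := f) (s := Vp) (t := D)
        (fun v hv => Finset.mem_image_of_mem f hv)
      rw [hVpcard] at this
      exact this.symm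
    have hffib2 : ∀ a ∈ D, (Vp.filter (fun v => f v = a)).card = 2 := by
      by_contra hex
      push_neg at hex
      obtain ⟨a0, ha0, hne⟩ := hex
      have hsl : ∑ a ∈ D, (Vp.filter (fun v => f v = a)).card < ∑ _a ∈ D, 2 :=
        Finset.sum_lt_sum (fun a _ => hffiber a)
          ⟨a0, ha0, lt_of_le_of_ne (hffiber a0) hne⟩
      rw [Finset.sum_const, hfsum] at hsl
      simp [hDk] at hsl
      omega
    have hclass1 : ∀ a ∈ D, ∃ w : Fin (4*k+1),
        c w = a ∧ (∀ x, c x = a → x = w) ∧ w ∉ Vp := by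
      intro a ha
      obtain ⟨v1, v2, hne, heq⟩ := Finset.card_eq_two.mp (hffib2 a ha)
      have hv1 : v1 ∈ Vp ∧ f v1 = a := by
        have : v1 ∈ Vp.filter (fun v => f v = a) := by rw [heq]; simp
        exact Finset.mem_filter.mp this
      have hv2 : v2 ∈ Vp ∧ f v2 = a := by
        have : v2 ∈ Vp.filter (fun v => f v = a) := by rw [heq]; simp
        exact Finset.mem_filter.mp this
      obtain ⟨⟨w, hw⟩, -⟩ := hf v1 hv1.1
      rw [hv1.2] at hw
      have key : ∀ vl vr : Fin (4*k+1), vl ∈ Vp → vr ∈ Vp → f vl = a → f vr = a →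
          (vl:ℕ)+1 = (w:ℕ) → (w:ℕ)+1 = (vr:ℕ) →
          (∀ x, c x = a → x = w) ∧ w ∉ Vp := by
        intro vl vr hvl hvr hfl hfr hl hr
        constructor
        · intro x hx
          have hAl : A vl x := (hf vl hvl).2 x (by rw [hfl]; exact hx)
          have hAr : A vr x := (hf vr hvr).2 x (by rw [hfr]; exact hx)
          have h1 : (vl:ℕ)+1 = (x:ℕ) ∨ (x:ℕ)+1 = (vl:ℕ) := by
            rcases harc _ _ hAl with ⟨h,_⟩|⟨h,_⟩
            exacts [Or.inl h, Or.inr h]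
          have h2 : (vr:ℕ)+1 = (x:ℕ) ∨ (x:ℕ)+1 = (vr:ℕ) := by
            rcases harc _ _ hAr with ⟨h,_⟩|⟨h,_⟩
            exacts [Or.inl h, Or.inr h]
          exact Fin.ext (by omega)
        · intro hwVp
          have h4 := (hsrc w hwVp).2.2.2
          have hAr : A vr w := (hf vr hvr).2 w (by rw [hfr]; exact hw)
          rcases harc _ _ hAr with ⟨h,_⟩|⟨_,hfalse⟩
          · omega
          · rw [h4] at hfalse
            exact Bool.noConfusion hfalse
      have hA1 : A v1 w := (hf v1 hv1.1).2 w (by rw [hv1.2]; exact hw)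
      have hA2 : A v2 w := (hf v2 hv2.1).2 w (by rw [hv2.2]; exact hw)
      have hc1 : (v1:ℕ)+1 = (w:ℕ) ∨ (w:ℕ)+1 = (v1:ℕ) := by
        rcases harc _ _ hA1 with ⟨h,_⟩|⟨h,_⟩
        exacts [Or.inl h, Or.inr h]
      have hc2 : (v2:ℕ)+1 = (w:ℕ) ∨ (w:ℕ)+1 = (v2:ℕ) := by
        rcases harc _ _ hA2 with ⟨h,_⟩|⟨h,_⟩
        exacts [Or.inl h, Or.inr h]
      have hne' : (v1:ℕ) ≠ (v2:ℕ) := fun h => hne (Fin.ext h)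
      rcases hc1 with h1|h1 <;> rcases hc2 with h2|h2
      · omega
      · obtain ⟨hk1, hk2⟩ := key v1 v2 hv1.1 hv2.1 hv1.2 hv2.2 h1 h2
        exact ⟨w, hw, hk1, hk2⟩
      · obtain ⟨hk1, hk2⟩ := key v2 v1 hv2.1 hv1.1 hv2.2 hv1.2 h2 h1
        exact ⟨w, hw, hk1, hk2⟩
      · omega
    -- (D,E)
    have hcvnotD : ∀ v ∈ Vp, c v ∉ D := by
      intro v hv hcv
      obtain ⟨w, hw1, hw2, hw3⟩ := hclass1 (c v) hcv
      have hvw : v = w := hw2 v rfl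
      rw [hvw] at hv
      exact hw3 hv
    obtain ⟨b, hb⟩ := Finset.card_eq_one.mp hDc1
    have hnotD : ∀ x : Fin t, x ∉ D → x = b := by
      intro x hx
      have : x ∈ Dᶜ := Finset.mem_compl.mpr hx
      rw [hb] at this
      simpa using this
    have hnbrD : ∀ v ∈ Vp, ∀ u : Fin (4*k+1),
        ((u:ℕ) = (v:ℕ)+1 ∨ (u:ℕ)+1 = (v:ℕ)) → c u ∈ D := by
      intro v hv u hu
      by_contra hcu
      have hA' := hout v hv u hu
      exact hproper v u hA' (by rw [hnotD _ (hcvnotD v hv), hnotD _ hcu])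
    -- (F) final double counting
    set W : Finset (Fin (4*k+1)) := Finset.univ.filter (fun u => c u ∈ D) with hW
    have hWcard : W.card = k := by
      have hWs := Finset.card_eq_sum_card_fiberwise (f := c) (s := W) (t := D)
        (fun u hu => (Finset.mem_filter.mp hu).2)
      have h1 : ∀ a ∈ D, (W.filter (fun u => c u = a)).card = 1 := by
        intro a ha
        obtain ⟨w, hw1, hw2, _⟩ := hclass1 a ha
        rw [Finset.card_eq_one]
        refine ⟨w, ?_⟩
        ext x
        simp only [Finset.mem_filter, Finset.mem_singleton, hW, Finset.mem_univ, true_and]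
        constructor
        · rintro ⟨_, hx⟩
          exact hw2 x hx
        · rintro rfl
          exact ⟨hw1 ▸ ha, hw1⟩
      rw [hWs, Finset.sum_congr rfl h1, Finset.sum_const, hDk]
      simp
    set S2 : Finset (Fin (4*k+1) × Bool) := Vp ×ˢ Finset.univ with hS2
    have hS2card : S2.card = 4*k := by
      rw [hS2, Finset.card_product, hVpcard]
      simp
      omega
    set φ : Fin (4*k+1) × Bool → ℕ :=
      fun p => if p.2 then (p.1:ℕ)+1 else (p.1:ℕ)-1 with hφ
    have hmaps : ∀ p ∈ S2, φ p ∈ W.image (Fin.val) := by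
      intro p hp
      have hp' : p.1 ∈ Vp := (Finset.mem_product.mp hp).1
      obtain ⟨hpos, hlt4, -, -⟩ := hsrc p.1 hp'
      by_cases hs : p.2 = true
      · have hlt : (p.1:ℕ)+1 < 4*k+1 := by omega
        refine Finset.mem_image.mpr ⟨⟨(p.1:ℕ)+1, hlt⟩, ?_, ?_⟩
        · exact Finset.mem_filter.mpr ⟨Finset.mem_univ _, hnbrD p.1 hp' _ (Or.inl rfl)⟩
        · simp [hφ, hs]
      · have hs' : p.2 = false := by simpa using hs
        have hlt : (p.1:ℕ)-1 < 4*k+1 := by omega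
        refine Finset.mem_image.mpr ⟨⟨(p.1:ℕ)-1, hlt⟩, ?_, ?_⟩
        · refine Finset.mem_filter.mpr ⟨Finset.mem_univ _, hnbrD p.1 hp' _ (Or.inr ?_)⟩
          simp
          omega
        · simp [hφ, hs']
    have hfib : ∀ m ∈ W.image Fin.val, (S2.filter (fun p => φ p = m)).card ≤ 2 := by
      intro m _
      apply card_le_two_pq (P := fun p : Fin (4*k+1) × Bool => p.2 = true)
        (Q := fun p : Fin (4*k+1) × Bool => p.2 = false)
      · intro x _
        rcases Bool.dichotomy x.2 with h|h
        · exact Or.inr h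
        · exact Or.inl h
      · intro x hx y hy h1 h2
        have hxf := Finset.mem_filter.mp hx
        have hyf := Finset.mem_filter.mp hy
        have hx1 : (x.1:ℕ)+1 = m := by rw [← hxf.2]; simp [hφ, h1]
        have hy1 : (y.1:ℕ)+1 = m := by rw [← hyf.2]; simp [hφ, h2]
        have hxy : x.1 = y.1 := Fin.ext (by omega)
        exact Prod.ext hxy (by rw [h1, h2])
      · intro x hx y hy h1 h2
        have hxf := Finset.mem_filter.mp hx
        have hyf := Finset.mem_filter.mp hy
        have hxV : x.1 ∈ Vp := (Finset.mem_product.mp hxf.1).1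
        have hyV : y.1 ∈ Vp := (Finset.mem_product.mp hyf.1).1
        have hxpos := (hsrc x.1 hxV).1
        have hypos := (hsrc y.1 hyV).1
        have hx1 : (x.1:ℕ)-1 = m := by rw [← hxf.2]; simp [hφ, h1]
        have hy1 : (y.1:ℕ)-1 = m := by rw [← hyf.2]; simp [hφ, h2]
        have hxy : x.1 = y.1 := Fin.ext (by omega)
        exact Prod.ext hxy (by rw [h1, h2])
    have hfin : S2.card ≤ 2 * (W.image Fin.val).card :=
      Finset.card_le_mul_card_image_of_maps_to hmaps 2 hfib
    have himg : (W.image Fin.val).card ≤ k :=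
      le_trans Finset.card_image_le (le_of_eq hWcard)
    rw [hS2card] at hfin
    omega


def ubColor (k : ℕ) (v : Fin (4*k+1)) : Fin (k+2) :=
  if (v:ℕ) % 2 = 1 then ⟨0, by omega⟩
  else if h : (v:ℕ) % 4 = 2 then ⟨2 + (v:ℕ)/4, by have := v.isLt; omega⟩
  else ⟨1, by omega⟩

lemma ubColor_val (k : ℕ) (v : Fin (4*k+1)) :
    ((ubColor k v : Fin (k+2)) : ℕ) =
      if (v:ℕ) % 2 = 1 then 0 else if (v:ℕ) % 4 = 2 then 2 + (v:ℕ)/4 else 1 := by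
  rw [ubColor]; split_ifs <;> simp

lemma ub (k : ℕ) (hk : 1 ≤ k) :
    ∃ c : Fin (4*k+1) → Fin (k+2),
      IsDominatorColoring (pathArc (4*k+1) (fun i => decide (i % 2 = 1))) c := by
  refine ⟨ubColor k, ?_, ?_⟩
  · intro u v hA
    have hadj : ((u:ℕ) + 1 = v ∧ (u:ℕ) % 2 = 1) ∨ ((v:ℕ) + 1 = u ∧ ¬ ((v:ℕ) % 2 = 1)) := by
      rcases hA with ⟨h1, h2⟩ | ⟨h1, h2⟩
      · exact Or.inl ⟨h1, by simpa using h2⟩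
      · exact Or.inr ⟨h1, by simpa using h2⟩
    intro heq
    have hval := congrArg Fin.val heq
    rw [ubColor_val, ubColor_val] at hval
    split_ifs at hval <;> omega
  · intro v ⟨w, hA⟩
    have hvodd : (v:ℕ) % 2 = 1 := by
      rcases hA with ⟨h1, h2⟩ | ⟨h1, h2⟩
      · simpa using h2
      · have : ¬ ((w:ℕ) % 2 = 1) := by simpa using h2
        omega
    have hvlt := v.isLt
    by_cases h4 : (v:ℕ) % 4 = 1
    · -- neighbor v+1
      have hlt : (v:ℕ) + 1 < 4*k+1 := by omega
      set u : Fin (4*k+1) := ⟨(v:ℕ)+1, hlt⟩ with hu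
      have huval : (u:ℕ) = (v:ℕ)+1 := rfl
      refine ⟨ubColor k u, ⟨u, rfl⟩, ?_⟩
      intro x hx
      have hval := congrArg Fin.val hx
      rw [ubColor_val, ubColor_val] at hval
      have hxu : (x:ℕ) = (u:ℕ) := by split_ifs at hval <;> omega
      have : x = u := Fin.ext hxu
      subst this
      exact Or.inl ⟨rfl, by simp; omega⟩
    · -- v % 4 = 3, neighbor v-1
      have h43 : (v:ℕ) % 4 = 3 := by omega
      have hlt : (v:ℕ) - 1 < 4*k+1 := by omega
      set u : Fin (4*k+1) := ⟨(v:ℕ)-1, hlt⟩ with hu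
      have huval : (u:ℕ) = (v:ℕ)-1 := rfl
      refine ⟨ubColor k u, ⟨u, rfl⟩, ?_⟩
      intro x hx
      have hval := congrArg Fin.val hx
      rw [ubColor_val, ubColor_val] at hval
      have hxu : (x:ℕ) = (u:ℕ) := by split_ifs at hval <;> omega
      have : x = u := Fin.ext hxu
      subst this
      refine Or.inr ⟨by omega, by simp; omega⟩


lemma exists_col (n : ℕ) (o : ℕ → Bool) :
    ∃ c : Fin n → Fin n, IsDominatorColoring (pathArc n o) c := by
  refine ⟨id, fun u v h => ?_, fun v hv => ?_⟩
  · intro he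
    have he' : u = v := he
    rcases h with ⟨h1, _⟩ | ⟨h1, _⟩ <;>
      · rw [he'] at h1
        omega
  · obtain ⟨w, hw⟩ := hv
    refine ⟨w, ⟨w, rfl⟩, ?_⟩
    intro x hx
    have : x = w := hx
    rw [this]
    exact hw

theorem min_domChrom_orientations_of_path_four_k_add_one (k : ℕ) (hk : 1 ≤ k) :
    minDomChromPath (4 * k + 1) = k + 2 := by
  have lb' : ∀ o : ℕ → Bool, k + 2 ≤ domChrom (pathArc (4*k+1) o) := by
    intro o
    have hne : {m | ∃ c : Fin (4*k+1) → Fin m,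
        IsDominatorColoring (pathArc (4*k+1) o) c}.Nonempty :=
      ⟨4*k+1, exists_col (4*k+1) o⟩
    obtain ⟨c, hc⟩ := Nat.sInf_mem hne
    exact lower_bound k hk o _ c hc
  have hub : domChrom (pathArc (4*k+1) (fun i => decide (i % 2 = 1))) = k + 2 := by
    obtain ⟨c, hc⟩ := ub k hk
    refine le_antisymm (Nat.sInf_le ⟨c, hc⟩) (lb' _)
  refine le_antisymm (Nat.sInf_le ⟨_, hub.symm⟩) ?_
  refine le_csInf ⟨_, ⟨_, hub.symm⟩⟩ ?_
  rintro m ⟨o, rfl⟩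
  exact lb' o
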